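/- Let β₁ : V × V → U ⊕ U be a flat bilinear map satisfying the symmetry property that β₁(Y,Z) = (ξ,η) implies β₁(Z,Y) = (ξ,−η). If X is a regular element of β₁, then ker B_X = N(β₁), i.e. β₁(Y,Z) = 0 for all Y ∈ V whenever β₁(X,Z) = 0; consequently dim N(β₁) ≥ dim V − 2 dim U. -/

import Mathlib

open Module


/-- If `β₁ X Z = 0` and `X` is regular, then `β₁ Z Z ∈ range (β₁ X)`. -/
lemma stmt_9_aux_mem {V W : Type} [AddCommGroup V] [Module ℝ V] [FiniteDimensional ℝ V]
    [AddCommGroup W] [Module ℝ W] [FiniteDimensional ℝ W]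
    (β₁ : V →ₗ[ℝ] V →ₗ[ℝ] W) (X Z : V) (hXZ : β₁ X Z = 0)
    (hreg : ∀ Z' : V,
      finrank ℝ (LinearMap.range (β₁ Z')) ≤ finrank ℝ (LinearMap.range (β₁ X))) :
    β₁ Z Z ∈ LinearMap.range (β₁ X) := by
  by_contra hu
  set A : V →ₗ[ℝ] W := β₁ X with hA
  set r : ℕ := finrank ℝ (LinearMap.range A) with hr
  set u : W := β₁ Z Z with huu
  -- a basis of the range of A and preimages
  let v : Basis (Fin r) ℝ (LinearMap.range A) := Module.finBasis ℝ _
  have hpre : ∀ i : Fin r, ∃ e : V, A e = (v i : W) := fun i => (v i).2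
  choose e he using hpre
  -- the family of vectors
  let f : ℝ → Fin (r + 1) → W :=
    fun t => Fin.snoc (fun i => A (e i) + t • β₁ Z (e i)) u
  -- linear independence at t = 0
  have hspan : Submodule.span ℝ (Set.range fun i => (v i : W)) = LinearMap.range A := by
    have : (Set.range fun i => (v i : W)) =
        (LinearMap.range A).subtype '' (Set.range v) := by
      rw [← Set.range_comp]; rfl
    rw [this, ← Submodule.map_span, v.span_eq, Submodule.map_top,
      Submodule.range_subtype]
  have hf0 : LinearIndependent ℝ (f 0) := by
    have : f 0 = Fin.snoc (fun i => (v i : W)) u := by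
      funext i
      refine Fin.lastCases ?_ (fun j => ?_) i <;>
        simp [f, he]
    rw [this, linearIndependent_fin_snoc]
    refine ⟨?_, ?_⟩
    · exact v.linearIndependent.map' (LinearMap.range A).subtype
        (Submodule.ker_subtype _)
    · rw [hspan]; exact hu
  -- transfer to coordinates and use openness of linear independence
  set m : ℕ := finrank ℝ W with hm
  let κ : W ≃ₗ[ℝ] (Fin m → ℝ) := (Module.finBasis ℝ W).equivFun
  let F : ℝ → Fin (r + 1) → (Fin m → ℝ) := fun t i => κ (f t i)
  have hFcont : Continuous F := by
    apply continuous_pi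
    intro i
    refine Fin.lastCases ?_ (fun j => ?_) i
    · simp only [F, f, Fin.snoc_last]
      exact continuous_const
    · simp only [F, f, Fin.snoc_castSucc, map_add, map_smul]
      fun_prop
  have hF0 : LinearIndependent ℝ (F 0) :=
    hf0.map' κ.toLinearMap κ.ker
  have hev : ∀ᶠ t in nhds (0 : ℝ), LinearIndependent ℝ (F t) :=
    (hFcont.tendsto 0).eventually
      (isOpen_setOf_linearIndependent.eventually_mem hF0)
  obtain ⟨t, ht, ht0⟩ : ∃ t : ℝ, LinearIndependent ℝ (F t) ∧ t ≠ 0 := by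
    have := hev.filter_mono (nhdsWithin_le_nhds (s := {(0:ℝ)}ᶜ))
    exact (this.and self_mem_nhdsWithin).exists
  have hft : LinearIndependent ℝ (f t) := ht.of_comp κ.toLinearMap
  -- all vectors lie in the range of β₁ (X + t • Z)
  set φ : V →ₗ[ℝ] W := β₁ (X + t • Z) with hφ
  have hφapp : ∀ y : V, φ y = A y + t • β₁ Z y := by
    intro y; simp [φ, A, map_add, map_smul]
  have hmem : ∀ i : Fin (r + 1), f t i ∈ LinearMap.range φ := by
    intro i
    refine Fin.lastCases ?_ (fun j => ?_) i
    · have : φ Z = t • u := by rw [hφapp, hXZ]; simp [huu]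
      have : u = φ (t⁻¹ • Z) := by
        rw [map_smul, this, smul_smul, inv_mul_cancel₀ ht0, one_smul]
      simp only [f, Fin.snoc_last, this]
      exact LinearMap.mem_range_self _ _
    · simp only [f, Fin.snoc_castSucc, ← hφapp]
      exact LinearMap.mem_range_self _ _
  -- derive a rank contradiction
  let g : Fin (r + 1) → LinearMap.range φ := fun i => ⟨f t i, hmem i⟩
  have hg : LinearIndependent ℝ g := by
    have : f t = (LinearMap.range φ).subtype ∘ g := rfl
    exact (this ▸ hft).of_comp (LinearMap.range φ).subtype
  have hcard : r + 1 ≤ finrank ℝ (LinearMap.range φ) := by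
    simpa using hg.fintype_card_le_finrank
  have h2 : finrank ℝ (LinearMap.range φ) ≤ r := hreg (X + t • Z)
  omega

/-- For a flat β₁ into U ⊕ U (U positive definite) with the symmetry
β₁(Y,Z)=(ξ,η) ⟹ β₁(Z,Y)=(ξ,−η), the kernel of B_X at a regular element X
equals N(β₁); consequently dim N(β₁) ≥ dim V − 2 dim U. -/
theorem stmt_9
    {V : Type} [AddCommGroup V] [Module ℝ V] [FiniteDimensional ℝ V]
    {U : Type} [AddCommGroup U] [Module ℝ U] [FiniteDimensional ℝ U]
    (b : LinearMap.BilinForm ℝ U) (hbsymm : ∀ ξ η, b ξ η = b η ξ)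
    (hbpos : ∀ ξ : U, ξ ≠ 0 → 0 < b ξ ξ)
    (bW : LinearMap.BilinForm ℝ (U × U))
    (hbW : ∀ ξ η, bW ξ η = b ξ.1 η.1 - b ξ.2 η.2)
    (β₁ : V →ₗ[ℝ] V →ₗ[ℝ] U × U)
    (hflat : ∀ X Y Z T, bW (β₁ X Y) (β₁ Z T) = bW (β₁ X T) (β₁ Z Y))
    (hsym : ∀ (Y Z : V) (ξ η : U), β₁ Y Z = (ξ, η) → β₁ Z Y = (ξ, -η))
    (X : V)
    (hreg : ∀ Z : V,
      finrank ℝ (LinearMap.range (β₁ Z)) ≤ finrank ℝ (LinearMap.range (β₁ X))) :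
    LinearMap.ker (β₁ X) = (⨅ Y : V, LinearMap.ker (β₁ Y)) ∧
      finrank ℝ V - 2 * finrank ℝ U ≤
        finrank ℝ ((⨅ Y : V, LinearMap.ker (β₁ Y)) : Submodule ℝ V) := by
  have hbnn : ∀ ξ : U, 0 ≤ b ξ ξ := by
    intro ξ
    rcases eq_or_ne ξ 0 with h | h
    · simp [h]
    · exact (hbpos ξ h).le
  have hbzero : ∀ ξ : U, b ξ ξ ≤ 0 → ξ = 0 := by
    intro ξ h
    by_contra hne
    exact absurd h (not_le.2 (hbpos ξ hne))
  have key : ∀ Z : V, β₁ X Z = 0 → ∀ Y : V, β₁ Y Z = 0 := by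
    intro Z hZ Y
    -- perpendicularity of β₁ Y Z to the range of β₁ X
    have perp : ∀ Y' T : V, bW (β₁ X T) (β₁ Y' Z) = 0 := by
      intro Y' T
      rw [hflat X T Y' Z, hZ]
      simp
    -- second component of β₁ Z Z vanishes
    have hsym' : ∀ Y' Z' : V, β₁ Z' Y' = ((β₁ Y' Z').1, -(β₁ Y' Z').2) :=
      fun Y' Z' => hsym Y' Z' _ _ rfl
    have hdiag2 : (β₁ Z Z).2 = 0 := by
      have h := hsym' Z Z
      have h2 : (β₁ Z Z).2 = -(β₁ Z Z).2 := by
        conv_lhs => rw [h]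
      have h3 : (2:ℝ) • (β₁ Z Z).2 = 0 := by
        rw [two_smul]; nth_rewrite 1 [h2]; exact neg_add_cancel _
      simpa using (smul_eq_zero.mp h3).resolve_left (by norm_num)
    -- β₁ Z Z is in the range of β₁ X
    obtain ⟨T, hT⟩ := stmt_9_aux_mem β₁ X Z hZ hreg
    -- hence β₁ Z Z = 0
    have hZZ : β₁ Z Z = 0 := by
      have h1 : bW (β₁ Z Z) (β₁ Z Z) = 0 := by nth_rewrite 1 [← hT]; exact perp Z T
      rw [hbW, hdiag2] at h1
      have : b (β₁ Z Z).1 (β₁ Z Z).1 = 0 := by simpa using h1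
      have h2 : (β₁ Z Z).1 = 0 := hbzero _ this.le
      have : β₁ Z Z = ((β₁ Z Z).1, (β₁ Z Z).2) := rfl
      rw [this, h2, hdiag2]; rfl
    -- conclude β₁ Y Z = 0
    have h3 : bW (β₁ Y Z) (β₁ Z Y) = 0 := by
      rw [hflat Y Z Z Y, hZZ]
      simp
    rw [hsym' Y Z, hbW] at h3
    simp only [map_neg, LinearMap.neg_apply, sub_neg_eq_add] at h3
    have hq1 : (β₁ Y Z).1 = 0 := by
      refine hbzero _ ?_
      nlinarith [hbnn (β₁ Y Z).2]
    have hq2 : (β₁ Y Z).2 = 0 := by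
      refine hbzero _ ?_
      nlinarith [hbnn (β₁ Y Z).1]
    have : β₁ Y Z = ((β₁ Y Z).1, (β₁ Y Z).2) := rfl
    rw [this, hq1, hq2]; rfl
  have hker : LinearMap.ker (β₁ X) = (⨅ Y : V, LinearMap.ker (β₁ Y)) := by
    refine le_antisymm ?_ (iInf_le _ X)
    refine le_iInf fun Y => fun Z hZ => ?_
    exact LinearMap.mem_ker.2 (key Z (LinearMap.mem_ker.1 hZ) Y)
  refine ⟨hker, ?_⟩
  have h3 := LinearMap.finrank_range_add_finrank_ker (β₁ X)
  have h4 : finrank ℝ (LinearMap.range (β₁ X)) ≤ finrank ℝ (U × U) :=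
    Submodule.finrank_le _
  have h5 : finrank ℝ (U × U) = finrank ℝ U + finrank ℝ U :=
    Module.finrank_prod
  rw [← hker]
  omega
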